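/- Let b ∈ G and let I < n be such that Σ_{i=0}^{I} t_{b,i} = I + 1. Then the row content satisfies i(b) > I; in particular there exists i > I with t_{b,i} = 0. -/

import Mathlib

open Finset

/-- The partial sum `Σ_{k=0}^{i-1} a_{k j}` as an integer. -/
def psum (a : ℕ → ℕ → ℕ) (i j : ℕ) : ℤ := ∑ k ∈ Finset.range i, (a k j : ℤ)

/-- `b ∈ B`, i.e. `0 ≤ b_j < Σ_{i=0}^{n} a_{ij}` for all `j`. -/
def memB (n : ℕ) (a : ℕ → ℕ → ℕ) (b : ℕ → ℤ) : Prop :=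
  ∀ j < n, 0 ≤ b j ∧ b j < psum a (n + 1) j

/-- `φ` is the type function of `b`:
`Σ_{k=0}^{φ(j)-1} a_{kj} ≤ b_j < Σ_{k=0}^{φ(j)} a_{kj}` for all `j < n`. -/
def IsTypeFun (n : ℕ) (a : ℕ → ℕ → ℕ) (b : ℕ → ℤ) (φ : ℕ → ℕ) : Prop :=
  ∀ j < n, φ j ≤ n ∧ psum a (φ j) j ≤ b j ∧ b j < psum a (φ j + 1) j

/-- The type vector `t_{b,i} = #{j : φ_b(j) = i}`. -/
def typeVec (n : ℕ) (φ : ℕ → ℕ) (i : ℕ) : ℕ :=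
  ((Finset.range n).filter fun j => φ j = i).card

/-- `ib` is the row content of a point with type function `φ`:
the largest `i ∈ {0,…,n}` with `t_{b,i} = 0`. -/
def IsRowContent (n : ℕ) (φ : ℕ → ℕ) (ib : ℕ) : Prop :=
  ib ≤ n ∧ typeVec n φ ib = 0 ∧ ∀ i ≤ n, typeVec n φ i = 0 → i ≤ ib

/-- The vector `a(b)`: `a(b)_j = 0` if `φ_b(j) < i(b)` and `a(b)_j = a_{i(b) j}` otherwise. -/
def ashift (a : ℕ → ℕ → ℕ) (φ : ℕ → ℕ) (ib j : ℕ) : ℤ :=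
  if φ j < ib then 0 else (a ib j : ℤ)

/-- `b' ∈ R(b) = {b - a(b) + c : c ∈ A_{i(b)}}`. -/
def memR (n : ℕ) (a : ℕ → ℕ → ℕ) (b : ℕ → ℤ) (φ : ℕ → ℕ) (ib : ℕ) (b' : ℕ → ℤ) : Prop :=
  ∀ j < n, b j - ashift a φ ib j ≤ b' j ∧ b' j ≤ b j - ashift a φ ib j + (a ib j : ℤ)

/-- The greedy condition: `Σ_{i=0}^{I} t_{b,i} ≤ I + 1` for all `I < n`. -/
def memG (n : ℕ) (φ : ℕ → ℕ) : Prop :=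
  ∀ I < n, ∑ i ∈ Finset.range (I + 1), typeVec n φ i ≤ I + 1

/-- A point is mixed if `t_{b,i} ≤ 1` for all `i ∈ {0,…,n}`. -/
def Mixed (n : ℕ) (φ : ℕ → ℕ) : Prop := ∀ i ≤ n, typeVec n φ i ≤ 1

/-- `Ib = I_b`: for non-mixed `b` the largest `i` with `t_{b,i} ≥ 2`; for mixed `b`, `0`. -/
def IsIb (n : ℕ) (φ : ℕ → ℕ) (Ib : ℕ) : Prop :=
  (2 ≤ typeVec n φ Ib ∧ ∀ i, 2 ≤ typeVec n φ i → i ≤ Ib) ∨ (Mixed n φ ∧ Ib = 0)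

/-- `g_b = #{i < I_b : t_{b,i} = 0}`. -/
def gval (n : ℕ) (φ : ℕ → ℕ) (Ib : ℕ) : ℕ :=
  ((Finset.range Ib).filter fun i => typeVec n φ i = 0).card

theorem rowContent_gt_of_partial_sum_eq
    (n : ℕ) (hn : 0 < n) (a : ℕ → ℕ → ℕ)
    (hpos : ∀ i ≤ n, ∀ j < n, 0 < a i j)
    (hord : ∀ j < n, ∀ i i' : ℕ, i ≤ i' → i' < n → a i j ≤ a i' j)
    (b : ℕ → ℤ) (hb : memB n a b)
    (φ : ℕ → ℕ) (hφ : IsTypeFun n a b φ)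
    (hG : memG n φ)
    (I : ℕ) (hI : I < n)
    (hsum : ∑ i ∈ Finset.range (I + 1), typeVec n φ i = I + 1)
    (ib : ℕ) (hib : IsRowContent n φ ib) :
    I < ib ∧ ∃ i, I < i ∧ i ≤ n ∧ typeVec n φ i = 0 := by
  have htotal : ∑ i ∈ Finset.range (n + 1), typeVec n φ i = n := by
    have := Finset.card_eq_sum_card_fiberwise
      (f := φ) (s := Finset.range n) (t := Finset.range (n + 1))
      (fun j hj => Finset.mem_range.mpr (Nat.lt_succ_of_le (hφ j (Finset.mem_range.mp hj)).1))
    simpa [typeVec] using this.symm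
  have hsplit : ∑ i ∈ Finset.range (I + 1), typeVec n φ i
      + ∑ i ∈ Finset.Ico (I + 1) (n + 1), typeVec n φ i
      = ∑ i ∈ Finset.range (n + 1), typeVec n φ i := by
    rw [Finset.range_eq_Ico, Finset.range_eq_Ico]
    exact Finset.sum_Ico_consecutive (typeVec n φ) (Nat.zero_le _) (show I + 1 ≤ n + 1 by omega)
  have htail : ∑ i ∈ Finset.Ico (I + 1) (n + 1), typeVec n φ i = n - (I + 1) := by omega
  have hzero : ∃ i ∈ Finset.Ico (I + 1) (n + 1), typeVec n φ i = 0 := by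
    by_contra h
    push_neg at h
    have hcard : (Finset.Ico (I + 1) (n + 1)).card = n - I := by
      rw [Nat.card_Ico]; omega
    have hge : n - I ≤ ∑ i ∈ Finset.Ico (I + 1) (n + 1), typeVec n φ i := by
      have := Finset.card_nsmul_le_sum (Finset.Ico (I + 1) (n + 1)) (typeVec n φ) 1
        (fun i hi => Nat.one_le_iff_ne_zero.mpr (h i hi))
      simpa [hcard] using this
    omega
  obtain ⟨i, hi, hti⟩ := hzero
  rw [Finset.mem_Ico] at hi
  have h1 : I < i := by omega
  have h2 : i ≤ n := by omega
  have h3 : i ≤ ib := hib.2.2 i h2 hti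
  exact ⟨lt_of_lt_of_le h1 h3, i, h1, h2, hti⟩
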